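/- arXiv:1704.01449 — 2 statements merged into one kernel-verified Lean document; each statement's English description precedes it below -/
import Mathlib

section
/- (Proposition 1, attainment.) Let n, m ≥ 1, let A_0,…,A_m ∈ ℂ^{n×n}, set P(z) = Σ_{j=0}^m A_j z^j and P'(z) = Σ_{j=1}^m j A_j z^{j-1}. Let λ₀ ∈ ℂ, let x₀, y₀ ∈ ℂ^n be unit vectors with y₀^H P(λ₀) = 0 and y₀^H P'(λ₀) x₀ ≠ 0. Let ω_0,…,ω_m ≥ 0, let η ∈ ℂ with |η| = 1, and define the maximal perturbations Δ_j = η ω_j e^{-i j arg(λ₀)} y₀ x₀^H for j = 0,…,m. Suppose λ : ℝ → ℂ and x : ℝ → ℂ^n are differentiable at 0 with λ(0) = λ₀, x(0) = x₀, and Σ_{j=0}^m (A_j + ε Δ_j) λ(ε)^j x(ε) = 0 for all ε in a neighborhood of 0. Then |λ'(0)| = ( Σ_{j=0}^m ω_j |λ₀|^j ) / | y₀^H P'(λ₀) x₀ |. -/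
private lemma sum_mulVec' {ι : Type*} {n : ℕ} (w : Fin n → ℂ) (s : Finset ι)
    (M : ι → Matrix (Fin n) (Fin n) ℂ) :
    (∑ j ∈ s, M j).mulVec w = ∑ j ∈ s, (M j).mulVec w := by
  ext i
  simp only [Matrix.mulVec, dotProduct, Finset.sum_apply, Matrix.sum_apply, Finset.sum_mul]
  exact Finset.sum_comm

private lemma dot_sum' {ι : Type*} {n : ℕ} (v : Fin n → ℂ) (s : Finset ι)
    (w : ι → Fin n → ℂ) :
    dotProduct v (∑ j ∈ s, w j) = ∑ j ∈ s, dotProduct v (w j) := by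
  simp only [dotProduct, Finset.sum_apply, Finset.mul_sum]
  exact Finset.sum_comm

private lemma sum_dot' {ι : Type*} {n : ℕ} (v : Fin n → ℂ) (s : Finset ι)
    (w : ι → Fin n → ℂ) :
    dotProduct (∑ j ∈ s, w j) v = ∑ j ∈ s, dotProduct (w j) v := by
  simp only [dotProduct, Finset.sum_apply, Finset.sum_mul]
  exact Finset.sum_comm

private lemma vecMul_sum' {ι : Type*} {n : ℕ} (v : Fin n → ℂ) (s : Finset ι)
    (M : ι → Matrix (Fin n) (Fin n) ℂ) :
    Matrix.vecMul v (∑ j ∈ s, M j) = ∑ j ∈ s, Matrix.vecMul v (M j) := by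
  ext k
  simp only [Matrix.vecMul, dotProduct, Matrix.sum_apply, Finset.sum_apply,
    Finset.mul_sum]
  exact Finset.sum_comm

private lemma vecMul_smul'' {n : ℕ} (v : Fin n → ℂ) (a : ℂ) (M : Matrix (Fin n) (Fin n) ℂ) :
    Matrix.vecMul v (a • M) = a • Matrix.vecMul v M := by
  ext k
  simp only [Matrix.vecMul, dotProduct, Matrix.smul_apply, Pi.smul_apply, smul_eq_mul,
    Finset.mul_sum]
  exact Finset.sum_congr rfl fun i _ => by ring

private lemma unit_dot {n : ℕ} (v : Fin n → ℂ) (hv : ∑ i, ‖v i‖ ^ 2 = 1) :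
    dotProduct (star v) v = 1 := by
  have h1 : ∀ z : ℂ, (starRingEnd ℂ) z * z = ((‖z‖ ^ 2 : ℝ) : ℂ) := fun z => by
    rw [mul_comm, Complex.mul_conj, Complex.normSq_eq_norm_sq]
  have : dotProduct (star v) v = ((∑ i, ‖v i‖ ^ 2 : ℝ) : ℂ) := by
    simp only [dotProduct, Pi.star_apply, Complex.star_def, h1]
    push_cast
    rfl
  rw [this, hv]; norm_num

private lemma vecMulVec_mulVec' {n : ℕ} (y xx w : Fin n → ℂ) :
    (Matrix.vecMulVec y xx).mulVec w = (dotProduct xx w) • y := by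
  ext i
  simp only [Matrix.mulVec, Matrix.vecMulVec_apply, dotProduct, Pi.smul_apply,
    smul_eq_mul, Finset.sum_mul]
  exact Finset.sum_congr rfl fun k _ => by ring

/-- Proposition 1, attainment: for the maximal perturbations
`Δ_j = η ω_j e^{-i j arg(lam₀)} y₀ x₀ᴴ`, the first-order eigenvalue perturbation
attains the bound: `|λ'(0)| = (∑_{j=0}^m ω_j |lam₀|^j) / |y₀ᴴ P'(lam₀) x₀|`. -/
theorem statement_4 {n m : ℕ} (hn : 1 ≤ n) (hm : 1 ≤ m)
    (A : ℕ → Matrix (Fin n) (Fin n) ℂ)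
    (lam₀ lam' : ℂ) (x₀ y₀ : Fin n → ℂ)
    (hx₀ : ∑ i, ‖x₀ i‖ ^ 2 = 1) (hy₀ : ∑ i, ‖y₀ i‖ ^ 2 = 1)
    (hleft : Matrix.vecMul (star y₀) (∑ j ∈ Finset.range (m + 1), lam₀ ^ j • A j) = 0)
    (hsimple : dotProduct (star y₀)
      (Matrix.mulVec (∑ j ∈ Finset.range (m + 1), ((j : ℂ) * lam₀ ^ (j - 1)) • A j) x₀) ≠ 0)
    (ω : ℕ → ℝ) (hω : ∀ j, j ≤ m → 0 ≤ ω j)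
    (η : ℂ) (hη : ‖η‖ = 1)
    (Δ : ℕ → Matrix (Fin n) (Fin n) ℂ)
    (hΔ : ∀ j, Δ j = (η * (ω j : ℂ) *
      Complex.exp (-(Complex.I * (j : ℂ) * (lam₀.arg : ℂ)))) • Matrix.vecMulVec y₀ (star x₀))
    (lam : ℝ → ℂ) (x : ℝ → Fin n → ℂ) (x' : Fin n → ℂ)
    (hlam : HasDerivAt lam lam' 0) (hx : HasDerivAt x x' 0)
    (hlam0 : lam 0 = lam₀) (hx0 : x 0 = x₀)
    (heq : ∀ᶠ ε in nhds (0 : ℝ), ∑ j ∈ Finset.range (m + 1),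
      lam ε ^ j • Matrix.mulVec (A j + (ε : ℂ) • Δ j) (x ε) = 0) :
    ‖lam'‖ = (∑ j ∈ Finset.range (m + 1), ω j * ‖lam₀‖ ^ j) /
      ‖dotProduct (star y₀)
        (Matrix.mulVec (∑ j ∈ Finset.range (m + 1), ((j : ℂ) * lam₀ ^ (j - 1)) • A j) x₀)‖ := by
  classical
  set c : ℕ → Fin n → ℂ := fun j => Matrix.vecMul (star y₀) (A j) with hc
  set d : ℕ → Fin n → ℂ := fun j => Matrix.vecMul (star y₀) (Δ j) with hd
  -- component derivatives
  have hxi : ∀ i, HasDerivAt (fun t => x t i) (x' i) 0 := fun i => hasDerivAt_pi.mp hx i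
  have hofReal : HasDerivAt (fun t : ℝ => (t : ℂ)) 1 0 := by
    simpa using (hasDerivAt_id (0 : ℝ)).ofReal_comp
  have hdot : ∀ w : Fin n → ℂ,
      HasDerivAt (fun t => dotProduct w (x t)) (dotProduct w x') 0 := by
    intro w
    simpa [dotProduct] using
      HasDerivAt.fun_sum (fun i (_ : i ∈ Finset.univ) => (hxi i).const_mul (w i))
  have hlampow : ∀ j : ℕ, HasDerivAt (fun t => lam t ^ j)
      ((j : ℂ) * lam₀ ^ (j - 1) * lam') 0 := by
    intro j
    have h := (hasDerivAt_pow j (lam 0)).comp (0 : ℝ) hlam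
    simpa [Function.comp_def, hlam0, mul_assoc] using h
  -- the scalar functions f j and their derivatives
  set f : ℕ → ℝ → ℂ := fun j t => lam t ^ j *
    (dotProduct (c j) (x t) + (t : ℂ) * dotProduct (d j) (x t)) with hf
  set D : ℕ → ℂ := fun j => ((j : ℂ) * lam₀ ^ (j - 1) * lam') * dotProduct (c j) x₀ +
    lam₀ ^ j * (dotProduct (c j) x' + dotProduct (d j) x₀) with hD
  have hfD : ∀ j, HasDerivAt (f j) (D j) 0 := by
    intro j
    have h1 := (hlampow j).fun_mul ((hdot (c j)).fun_add (hofReal.fun_mul (hdot (d j))))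
    convert h1 using 1
    · rfl
    simp only [hlam0, hx0, Complex.ofReal_zero, zero_mul, mul_zero, add_zero, one_mul, hD]
    try ring
  have hg : HasDerivAt (fun t => ∑ j ∈ Finset.range (m + 1), f j t)
      (∑ j ∈ Finset.range (m + 1), D j) 0 :=
    HasDerivAt.fun_sum (fun j _ => hfD j)
  -- the sum is eventually zero
  have hzero : (fun t => ∑ j ∈ Finset.range (m + 1), f j t) =ᶠ[nhds (0 : ℝ)]
      (fun _ => (0 : ℂ)) := by
    filter_upwards [heq] with t ht
    have key : ∑ j ∈ Finset.range (m + 1), f j t = dotProduct (star y₀)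
        (∑ j ∈ Finset.range (m + 1), lam t ^ j • Matrix.mulVec (A j + (t : ℂ) • Δ j) (x t)) := by
      rw [dot_sum']
      refine Finset.sum_congr rfl fun j _ => ?_
      rw [dotProduct_smul, Matrix.add_mulVec, Matrix.smul_mulVec,
        dotProduct_add, dotProduct_smul, Matrix.dotProduct_mulVec,
        Matrix.dotProduct_mulVec]
      simp only [hf, smul_eq_mul, hc, hd]
    rw [key, ht]
    simp
  have hDzero : ∑ j ∈ Finset.range (m + 1), D j = 0 :=
    hg.unique ((hasDerivAt_const (0 : ℝ) (0 : ℂ)).congr_of_eventuallyEq hzero)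
  -- identify the pieces
  set S : ℂ := dotProduct (star y₀)
    (Matrix.mulVec (∑ j ∈ Finset.range (m + 1), ((j : ℂ) * lam₀ ^ (j - 1)) • A j) x₀) with hS
  have hS_eq : S = ∑ j ∈ Finset.range (m + 1),
      ((j : ℂ) * lam₀ ^ (j - 1)) * dotProduct (c j) x₀ := by
    rw [hS, sum_mulVec', dot_sum']
    refine Finset.sum_congr rfl fun j _ => ?_
    rw [Matrix.smul_mulVec, dotProduct_smul, Matrix.dotProduct_mulVec]
    simp [hc]
  have hleft' : ∑ j ∈ Finset.range (m + 1),
      lam₀ ^ j * dotProduct (c j) x' = 0 := by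
    have h0 : dotProduct
        (Matrix.vecMul (star y₀) (∑ j ∈ Finset.range (m + 1), lam₀ ^ j • A j)) x' = 0 := by
      rw [hleft]; simp
    rw [← h0, vecMul_sum', sum_dot']
    refine Finset.sum_congr rfl fun j _ => ?_
    rw [vecMul_smul'', smul_dotProduct]
    simp [hc]
  have hxx : dotProduct (star x₀) x₀ = 1 := unit_dot x₀ hx₀
  have hyy : dotProduct (star y₀) y₀ = 1 := unit_dot y₀ hy₀
  have hdj : ∀ j, dotProduct (d j) x₀ =
      η * (ω j : ℂ) * Complex.exp (-(Complex.I * (j : ℂ) * (lam₀.arg : ℂ))) := by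
    intro j
    rw [hd]
    rw [← Matrix.dotProduct_mulVec, hΔ j, Matrix.smul_mulVec, dotProduct_smul,
      vecMulVec_mulVec', hxx, one_smul, hyy]
    simp
  -- lam₀ ^ j * e^{-i j arg} = |lam₀| ^ j
  have hpow : ∀ j : ℕ, lam₀ ^ j * Complex.exp (-(Complex.I * (j : ℂ) * (lam₀.arg : ℂ))) =
      ((‖lam₀‖ : ℝ) : ℂ) ^ j := by
    intro j
    have h1 : Complex.exp (-(Complex.I * (j : ℂ) * (lam₀.arg : ℂ))) =
        Complex.exp (-((lam₀.arg : ℂ) * Complex.I)) ^ j := by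
      rw [← Complex.exp_nat_mul]
      congr 1; ring
    rw [h1, ← mul_pow]
    congr 1
    have h2 := Complex.norm_mul_exp_arg_mul_I lam₀
    calc lam₀ * Complex.exp (-((lam₀.arg : ℂ) * Complex.I))
        = ((‖lam₀‖ : ℝ) : ℂ) * Complex.exp ((lam₀.arg : ℂ) * Complex.I) *
          Complex.exp (-((lam₀.arg : ℂ) * Complex.I)) := by rw [h2]
      _ = ((‖lam₀‖ : ℝ) : ℂ) := by
          rw [mul_assoc, ← Complex.exp_add, add_neg_cancel, Complex.exp_zero, mul_one]
  set T : ℝ := ∑ j ∈ Finset.range (m + 1), ω j * ‖lam₀‖ ^ j with hT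
  -- combine
  have h2 : ∑ j ∈ Finset.range (m + 1),
      ((j : ℂ) * lam₀ ^ (j - 1) * lam') * dotProduct (c j) x₀ = lam' * S := by
    rw [hS_eq, Finset.mul_sum]
    exact Finset.sum_congr rfl fun j _ => by ring
  have h3 : ∑ j ∈ Finset.range (m + 1),
      lam₀ ^ j * (dotProduct (c j) x' + dotProduct (d j) x₀) = η * (T : ℂ) := by
    simp only [mul_add]
    rw [Finset.sum_add_distrib, hleft', zero_add, hT]
    push_cast
    rw [Finset.mul_sum]
    refine Finset.sum_congr rfl fun j _ => ?_
    rw [hdj j, show lam₀ ^ j * (η * (ω j : ℂ) *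
        Complex.exp (-(Complex.I * (j : ℂ) * (lam₀.arg : ℂ)))) =
      η * ((ω j : ℂ) * (lam₀ ^ j *
        Complex.exp (-(Complex.I * (j : ℂ) * (lam₀.arg : ℂ))))) from by ring, hpow j]
  have hmain : lam' * S + η * (T : ℂ) = 0 := by
    rw [← hDzero]
    simp only [hD]
    rw [Finset.sum_add_distrib, h2, h3]
  have hTnn : 0 ≤ T := by
    refine Finset.sum_nonneg fun j hj => mul_nonneg (hω j ?_) (pow_nonneg (norm_nonneg _) _)
    exact Nat.lt_succ_iff.mp (Finset.mem_range.mp hj)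
  have hSne : ‖S‖ ≠ 0 := by
    simpa using hsimple
  have habs : ‖lam'‖ * ‖S‖ = T := by
    have h4 : lam' * S = -(η * (T : ℂ)) := by linear_combination hmain
    calc ‖lam'‖ * ‖S‖ = ‖lam' * S‖ := (norm_mul _ _).symm
      _ = ‖η * (T : ℂ)‖ := by rw [h4]; exact norm_neg _
      _ = T := by rw [norm_mul, hη, one_mul, Complex.norm_real, Real.norm_eq_abs, abs_of_nonneg hTnn]
  rw [eq_div_iff hSne]
  exact habs
end

section
/- (Proposition 2, attainment.) Let n, m ≥ 1, let A_0,…,A_m ∈ ℂ^{n×n}, set P(z) = Σ_{j=0}^m A_j z^j and P'(z) = Σ_{j=1}^m j A_j z^{j-1}. Let S_0,…,S_m be ℂ-linear subspaces of ℂ^{n×n}. Let λ₀ ∈ ℂ, let x₀, y₀ ∈ ℂ^n be unit vectors with y₀^H P(λ₀) = 0, y₀^H P'(λ₀) x₀ ≠ 0, and (y₀ x₀^H)|_{S_j} ≠ 0 for each j. Let ω_0,…,ω_m ≥ 0, let η ∈ ℂ with |η| = 1, and define the maximal structured perturbations Δ_j = η ω_j e^{-i j arg(λ₀)} (y₀ x₀^H)|_{S_j}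 / ‖(y₀ x₀^H)|_{S_j}‖_F. Suppose λ : ℝ → ℂ and x : ℝ → ℂ^n are differentiable at 0 with λ(0) = λ₀, x(0) = x₀, and Σ_{j=0}^m (A_j + ε Δ_j) λ(ε)^j x(ε) = 0 for all ε in a neighborhood of 0. Then |λ'(0)| = ( Σ_{j=0}^m ω_j ‖(y₀ x₀^H)|_{S_j}‖_F |λ₀|^j ) / | y₀^H P'(λ₀) x₀ |. -/
/-- The Frobenius norm of a complex matrix. -/
noncomputable def frobNorm {n : ℕ} (M : Matrix (Fin n) (Fin n) ℂ) : ℝ :=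
  Real.sqrt (∑ i, ∑ j, ‖M i j‖ ^ 2)

/-- The Frobenius inner product of two complex matrices. -/
noncomputable def frobInner {n : ℕ} (A B : Matrix (Fin n) (Fin n) ℂ) : ℂ :=
  ∑ i, ∑ j, (starRingEnd ℂ) (A i j) * B i j

open Matrix Finset

lemma mySum_mulVec {n : ℕ} (s : Finset ℕ) (M : ℕ → Matrix (Fin n) (Fin n) ℂ) (v : Fin n → ℂ) :
    (∑ j ∈ s, M j) *ᵥ v = ∑ j ∈ s, (M j) *ᵥ v := by
  ext i
  simp [Matrix.mulVec, dotProduct, Finset.sum_apply, Matrix.sum_apply, Finset.sum_mul]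
  rw [Finset.sum_comm]

lemma myVecMul_sum {n : ℕ} (s : Finset ℕ) (v : Fin n → ℂ) (M : ℕ → Matrix (Fin n) (Fin n) ℂ) :
    v ᵥ* (∑ j ∈ s, M j) = ∑ j ∈ s, v ᵥ* (M j) := by
  ext i
  simp [Matrix.vecMul, dotProduct, Finset.sum_apply, Matrix.sum_apply, Finset.mul_sum]
  rw [Finset.sum_comm]

lemma myDot_sum {n : ℕ} (v : Fin n → ℂ) (s : Finset ℕ) (f : ℕ → Fin n → ℂ) :
    v ⬝ᵥ (∑ j ∈ s, f j) = ∑ j ∈ s, v ⬝ᵥ f j := by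
  simp [dotProduct, Finset.sum_apply, Finset.mul_sum]
  exact Finset.sum_comm

lemma mySum_dot {n : ℕ} (s : Finset ℕ) (f : ℕ → Fin n → ℂ) (w : Fin n → ℂ) :
    (∑ j ∈ s, f j) ⬝ᵥ w = ∑ j ∈ s, f j ⬝ᵥ w := by
  simp [dotProduct, Finset.sum_apply, Finset.sum_mul]
  exact Finset.sum_comm

lemma myVecMul_smul {n : ℕ} (v : Fin n → ℂ) (c : ℂ) (M : Matrix (Fin n) (Fin n) ℂ) :
    v ᵥ* (c • M) = c • (v ᵥ* M) := by
  ext i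
  simp [Matrix.vecMul, dotProduct, Finset.mul_sum, Matrix.smul_apply, smul_eq_mul]
  exact Finset.sum_congr rfl fun k _ => by ring

lemma frobNorm_nonneg {n : ℕ} (M : Matrix (Fin n) (Fin n) ℂ) : 0 ≤ frobNorm M :=
  Real.sqrt_nonneg _

lemma frobNorm_sq {n : ℕ} (M : Matrix (Fin n) (Fin n) ℂ) :
    frobNorm M ^ 2 = ∑ i, ∑ j, ‖M i j‖ ^ 2 := by
  exact Real.sq_sqrt (Finset.sum_nonneg fun i _ => Finset.sum_nonneg fun j _ => sq_nonneg _)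

lemma frobNorm_pos {n : ℕ} {M : Matrix (Fin n) (Fin n) ℂ} (h : M ≠ 0) : 0 < frobNorm M := by
  apply Real.sqrt_pos.mpr
  have hex : ∃ i j, M i j ≠ 0 := by
    by_contra hc
    push_neg at hc
    exact h (by ext i j; simpa using hc i j)
  obtain ⟨i, j, hij⟩ := hex
  have h1 : 0 < ‖M i j‖ ^ 2 := pow_pos (norm_pos_iff.mpr hij) 2
  have h2 : ‖M i j‖ ^ 2 ≤ ∑ k, ‖M i k‖ ^ 2 :=
    Finset.single_le_sum (f := fun k => ‖M i k‖ ^ 2) (fun k _ => sq_nonneg _) (Finset.mem_univ j)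
  have h3 : ∑ k, ‖M i k‖ ^ 2 ≤ ∑ a, ∑ k, ‖M a k‖ ^ 2 :=
    Finset.single_le_sum (f := fun a => ∑ k, ‖M a k‖ ^ 2) (fun a _ => Finset.sum_nonneg fun k _ => sq_nonneg _) (Finset.mem_univ i)
  linarith

lemma frobInner_self {n : ℕ} (M : Matrix (Fin n) (Fin n) ℂ) :
    frobInner M M = ((frobNorm M ^ 2 : ℝ) : ℂ) := by
  rw [frobNorm_sq]
  simp only [frobInner]
  push_cast
  refine Finset.sum_congr rfl fun i _ => Finset.sum_congr rfl fun j _ => ?_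
  rw [mul_comm, Complex.mul_conj']

lemma dot_proj {n : ℕ} (x₀ y₀ : Fin n → ℂ) (q : Matrix (Fin n) (Fin n) ℂ)
    (h : frobInner (Matrix.vecMulVec y₀ (star x₀) - q) q = 0) :
    star y₀ ⬝ᵥ q *ᵥ x₀ = ((frobNorm q ^ 2 : ℝ) : ℂ) := by
  have h1 : frobInner (Matrix.vecMulVec y₀ (star x₀)) q = frobInner q q := by
    have h' := h
    simp only [frobInner, Matrix.sub_apply, map_sub, sub_mul, Finset.sum_sub_distrib] at h'
    exact sub_eq_zero.mp h'
  have h2 : star y₀ ⬝ᵥ q *ᵥ x₀ = frobInner (Matrix.vecMulVec y₀ (star x₀)) q := by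
    simp only [frobInner, dotProduct, Matrix.mulVec, Matrix.vecMulVec_apply,
      Pi.star_apply, _root_.map_mul, Finset.mul_sum, Complex.star_def, Complex.conj_conj]
    exact Finset.sum_congr rfl fun i _ => Finset.sum_congr rfl fun k _ => by ring
  rw [h2, h1, frobInner_self]

lemma pow_arg (lam₀ : ℂ) (j : ℕ) :
    lam₀ ^ j * Complex.exp (-(Complex.I * (j : ℂ) * (lam₀.arg : ℂ))) =
      ((‖lam₀‖ : ℝ) : ℂ) ^ j := by
  have h1 : -(Complex.I * (j : ℂ) * (lam₀.arg : ℂ)) = (j : ℂ) * (-((lam₀.arg : ℂ) * Complex.I)) := by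
    ring
  rw [h1, Complex.exp_nat_mul, ← mul_pow]
  congr 1
  conv_lhs => rw [← Complex.norm_mul_exp_arg_mul_I lam₀]
  rw [mul_assoc, ← Complex.exp_add]
  simp
/-- Proposition 2, attainment: for the maximal structured
perturbations `Δ_j = η ω_j e^{-i j arg(lam₀)} (y₀ x₀ᴴ)|_{S_j} / ‖(y₀ x₀ᴴ)|_{S_j}‖_F`,
`|λ'(0)| = (∑_{j=0}^m ω_j ‖(y₀ x₀ᴴ)|_{S_j}‖_F |lam₀|^j) / |y₀ᴴ P'(lam₀) x₀|`.
Here `p j` is the orthogonal projection of `y₀ x₀ᴴ` onto `S_j` (characterized by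
`p j ∈ S_j` and `y₀ x₀ᴴ - p j ⟂ S_j` w.r.t. the Frobenius inner product). -/
theorem statement_11 {n m : ℕ} (hn : 1 ≤ n) (hm : 1 ≤ m)
    (A : ℕ → Matrix (Fin n) (Fin n) ℂ)
    (S : ℕ → Submodule ℂ (Matrix (Fin n) (Fin n) ℂ))
    (lam₀ lam' : ℂ) (x₀ y₀ : Fin n → ℂ)
    (hx₀ : ∑ i, ‖x₀ i‖ ^ 2 = 1) (hy₀ : ∑ i, ‖y₀ i‖ ^ 2 = 1)
    (hleft : Matrix.vecMul (star y₀) (∑ j ∈ Finset.range (m + 1), lam₀ ^ j • A j) = 0)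
    (hsimple : dotProduct (star y₀)
      (Matrix.mulVec (∑ j ∈ Finset.range (m + 1), ((j : ℂ) * lam₀ ^ (j - 1)) • A j) x₀) ≠ 0)
    (p : ℕ → Matrix (Fin n) (Fin n) ℂ) (hpS : ∀ j, p j ∈ S j)
    (hproj : ∀ j, ∀ Z ∈ S j, frobInner (Matrix.vecMulVec y₀ (star x₀) - p j) Z = 0)
    (hpne : ∀ j, j ≤ m → p j ≠ 0)
    (ω : ℕ → ℝ) (hω : ∀ j, j ≤ m → 0 ≤ ω j)
    (η : ℂ) (hη : ‖η‖ = 1)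
    (Δ : ℕ → Matrix (Fin n) (Fin n) ℂ)
    (hΔ : ∀ j, Δ j = ((η * (ω j : ℂ) *
      Complex.exp (-(Complex.I * (j : ℂ) * (lam₀.arg : ℂ)))) / (frobNorm (p j) : ℂ)) • p j)
    (lam : ℝ → ℂ) (x : ℝ → Fin n → ℂ) (x' : Fin n → ℂ)
    (hlam : HasDerivAt lam lam' 0) (hx : HasDerivAt x x' 0)
    (hlam0 : lam 0 = lam₀) (hx0 : x 0 = x₀)
    (heq : ∀ᶠ ε in nhds (0 : ℝ), ∑ j ∈ Finset.range (m + 1),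
      lam ε ^ j • Matrix.mulVec (A j + (ε : ℂ) • Δ j) (x ε) = 0) :
    ‖lam'‖ =
      (∑ j ∈ Finset.range (m + 1), ω j * frobNorm (p j) * ‖lam₀‖ ^ j) /
      ‖dotProduct (star y₀)
        (Matrix.mulVec (∑ j ∈ Finset.range (m + 1), ((j : ℂ) * lam₀ ^ (j - 1)) • A j) x₀)‖ := by
  classical
  -- componentwise derivatives of x
  have hxk : ∀ k, HasDerivAt (fun ε => x ε k) (x' k) 0 := fun k => hasDerivAt_pi.mp hx k
  -- derivative of ε ↦ y₀ᴴ M x(ε)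
  have hdot : ∀ M : Matrix (Fin n) (Fin n) ℂ,
      HasDerivAt (fun ε => star y₀ ⬝ᵥ M *ᵥ x ε) ((star y₀ ᵥ* M) ⬝ᵥ x') 0 := by
    intro M
    have key : ∀ v : Fin n → ℂ, star y₀ ⬝ᵥ M *ᵥ v = ∑ k, (star y₀ ᵥ* M) k * v k := by
      intro v; rw [Matrix.dotProduct_mulVec]; rfl
    have hsum : HasDerivAt (fun ε => ∑ k, (star y₀ ᵥ* M) k * x ε k)
        (∑ k, (star y₀ ᵥ* M) k * x' k) 0 :=
      HasDerivAt.fun_sum (fun k _ => (hxk k).const_mul _)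
    have e1 : (fun ε => star y₀ ⬝ᵥ M *ᵥ x ε) = fun ε => ∑ k, (star y₀ ᵥ* M) k * x ε k :=
      funext fun ε => key (x ε)
    rw [e1]
    simpa [dotProduct] using hsum
  have hε1 : HasDerivAt (fun ε : ℝ => (ε : ℂ)) 1 0 := by
    have h0 : HasFDerivAt (fun ε : ℝ => (ε : ℂ)) Complex.ofRealCLM 0 :=
      Complex.ofRealCLM.hasFDerivAt
    simpa using h0.hasDerivAt
  have hpow : ∀ j : ℕ, HasDerivAt (fun ε => lam ε ^ j) ((j : ℂ) * lam₀ ^ (j - 1) * lam') 0 := by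
    intro j
    induction j with
    | zero => simpa using hasDerivAt_const (0 : ℝ) (1 : ℂ)
    | succ k ih =>
      have hmul := ih.fun_mul hlam
      have hfun : (fun ε => lam ε ^ k * lam ε) = fun ε => lam ε ^ (k + 1) := by
        funext ε; rw [pow_succ]
      rw [hfun, hlam0] at hmul
      convert hmul using 1
      · rfl
      rcases k with _ | l
      · simp
      · simp only [Nat.add_sub_cancel]
        push_cast
        ring
  -- the scalar-valued function h and its derivative
  have hDh : HasDerivAt (fun ε : ℝ => ∑ j ∈ Finset.range (m + 1),
      ((fun ε => lam ε ^ j) ε * (fun ε => star y₀ ⬝ᵥ (A j) *ᵥ x ε) ε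
        + ((fun ε => lam ε ^ j) ε * (fun ε : ℝ => (ε : ℂ)) ε) * (fun ε => star y₀ ⬝ᵥ (Δ j) *ᵥ x ε) ε))
      (∑ j ∈ Finset.range (m + 1),
        ((j : ℂ) * lam₀ ^ (j - 1) * lam' * (star y₀ ⬝ᵥ (A j) *ᵥ x₀)
          + lam₀ ^ j * ((star y₀ ᵥ* A j) ⬝ᵥ x')
          + lam₀ ^ j * (star y₀ ⬝ᵥ (Δ j) *ᵥ x₀))) 0 := by
    refine HasDerivAt.fun_sum fun j _ => ?_
    have h1 := hpow j
    have h2 := hdot (A j)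
    have h3 := hdot (Δ j)
    have hc := (h1.fun_mul h2).fun_add ((h1.fun_mul hε1).fun_mul h3)
    convert hc using 1
    simp [hlam0, hx0]
  -- h is eventually zero
  have hEq : (fun ε : ℝ => ∑ j ∈ Finset.range (m + 1),
      ((fun ε => lam ε ^ j) ε * (fun ε => star y₀ ⬝ᵥ (A j) *ᵥ x ε) ε
        + ((fun ε => lam ε ^ j) ε * (fun ε : ℝ => (ε : ℂ)) ε) * (fun ε => star y₀ ⬝ᵥ (Δ j) *ᵥ x ε) ε))
      =ᶠ[nhds (0 : ℝ)] fun _ => (0 : ℂ) := by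
    filter_upwards [heq] with ε hε
    have expand : ∑ j ∈ Finset.range (m + 1),
        (lam ε ^ j * (star y₀ ⬝ᵥ (A j) *ᵥ x ε)
          + (lam ε ^ j * (ε : ℂ)) * (star y₀ ⬝ᵥ (Δ j) *ᵥ x ε))
        = star y₀ ⬝ᵥ (∑ j ∈ Finset.range (m + 1),
            lam ε ^ j • ((A j + (ε : ℂ) • Δ j) *ᵥ x ε)) := by
      rw [myDot_sum]
      refine Finset.sum_congr rfl fun j _ => ?_
      rw [dotProduct_smul, Matrix.add_mulVec, Matrix.smul_mulVec,
        dotProduct_add, dotProduct_smul]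
      simp only [smul_eq_mul]
      ring
    show (∑ j ∈ Finset.range (m + 1),
        (lam ε ^ j * (star y₀ ⬝ᵥ (A j) *ᵥ x ε)
          + (lam ε ^ j * (ε : ℂ)) * (star y₀ ⬝ᵥ (Δ j) *ᵥ x ε))) = 0
    rw [expand, hε, dotProduct_zero]
  have hzero : HasDerivAt (fun ε : ℝ => ∑ j ∈ Finset.range (m + 1),
      ((fun ε => lam ε ^ j) ε * (fun ε => star y₀ ⬝ᵥ (A j) *ᵥ x ε) ε
        + ((fun ε => lam ε ^ j) ε * (fun ε : ℝ => (ε : ℂ)) ε) * (fun ε => star y₀ ⬝ᵥ (Δ j) *ᵥ x ε) ε))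
      0 0 :=
    (hasDerivAt_const (0 : ℝ) (0 : ℂ)).congr_of_eventuallyEq hEq
  have hkey : (∑ j ∈ Finset.range (m + 1),
      ((j : ℂ) * lam₀ ^ (j - 1) * lam' * (star y₀ ⬝ᵥ (A j) *ᵥ x₀)
        + lam₀ ^ j * ((star y₀ ᵥ* A j) ⬝ᵥ x')
        + lam₀ ^ j * (star y₀ ⬝ᵥ (Δ j) *ᵥ x₀))) = 0 := hDh.unique hzero
  -- split the sum
  set D : ℂ := dotProduct (star y₀)
      (Matrix.mulVec (∑ j ∈ Finset.range (m + 1), ((j : ℂ) * lam₀ ^ (j - 1)) • A j) x₀) with hDdef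
  set T : ℝ := ∑ j ∈ Finset.range (m + 1), ω j * frobNorm (p j) * ‖lam₀‖ ^ j with hTdef
  rw [Finset.sum_add_distrib, Finset.sum_add_distrib] at hkey
  have ha : ∑ j ∈ Finset.range (m + 1),
      (j : ℂ) * lam₀ ^ (j - 1) * lam' * (star y₀ ⬝ᵥ (A j) *ᵥ x₀) = lam' * D := by
    rw [hDdef]
    rw [show dotProduct (star y₀)
        (Matrix.mulVec (∑ j ∈ Finset.range (m + 1), ((j : ℂ) * lam₀ ^ (j - 1)) • A j) x₀)
        = ∑ j ∈ Finset.range (m + 1), ((j : ℂ) * lam₀ ^ (j - 1)) * (star y₀ ⬝ᵥ (A j) *ᵥ x₀) by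
      rw [mySum_mulVec, myDot_sum]
      refine Finset.sum_congr rfl fun j _ => ?_
      rw [Matrix.smul_mulVec, dotProduct_smul, smul_eq_mul]]
    rw [Finset.mul_sum]
    exact Finset.sum_congr rfl fun j _ => by ring
  have hb : ∑ j ∈ Finset.range (m + 1), lam₀ ^ j * ((star y₀ ᵥ* A j) ⬝ᵥ x') = 0 := by
    have e1 : ∑ j ∈ Finset.range (m + 1), lam₀ ^ j * ((star y₀ ᵥ* A j) ⬝ᵥ x')
        = (star y₀ ᵥ* (∑ j ∈ Finset.range (m + 1), lam₀ ^ j • A j)) ⬝ᵥ x' := by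
      rw [myVecMul_sum, mySum_dot]
      refine Finset.sum_congr rfl fun j _ => ?_
      rw [myVecMul_smul, smul_dotProduct, smul_eq_mul]
    rw [e1, hleft, zero_dotProduct]
  have hc : ∑ j ∈ Finset.range (m + 1), lam₀ ^ j * (star y₀ ⬝ᵥ (Δ j) *ᵥ x₀)
      = η * (T : ℂ) := by
    rw [hTdef]
    push_cast
    rw [Finset.mul_sum]
    refine Finset.sum_congr rfl fun j hj => ?_
    have hjm : j ≤ m := Finset.mem_range_succ_iff.mp hj
    have hq := dot_proj x₀ y₀ (p j) (hproj j (p j) (hpS j))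
    have hNpos : 0 < frobNorm (p j) := frobNorm_pos (hpne j hjm)
    have hN : ((frobNorm (p j) : ℝ) : ℂ) ≠ 0 := by
      exact_mod_cast ne_of_gt hNpos
    rw [hΔ j, Matrix.smul_mulVec, dotProduct_smul, smul_eq_mul, hq]
    have hB := pow_arg lam₀ j
    push_cast
    field_simp
    linear_combination (η * (ω j : ℂ)) * hB
  rw [ha, hb, hc, add_zero] at hkey
  -- conclude
  have hT : 0 ≤ T := by
    rw [hTdef]
    refine Finset.sum_nonneg fun j hj => ?_
    exact mul_nonneg (mul_nonneg (hω j (Finset.mem_range_succ_iff.mp hj)) (frobNorm_nonneg _))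
      (pow_nonneg (norm_nonneg _) j)
  have hprod : lam' * D = -(η * (T : ℂ)) := by linear_combination hkey
  have habs : ‖lam'‖ * ‖D‖ = T := by
    have h5 : ‖lam' * D‖ = T := by
      rw [hprod, norm_neg, norm_mul, hη, one_mul, Complex.norm_of_nonneg hT]
    rwa [norm_mul] at h5
  rw [eq_div_iff (norm_ne_zero_iff.mpr hsimple)]
  exact habs
end
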